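/- arXiv:1401.6754 — 4 statements merged into one kernel-verified Lean document; each statement's English description precedes it below -/
import Mathlib

section
/- Suppose the moments c_n satisfy (λ_n − λ_m) c_{n+m} + (μ_n − μ_m) c_{n+m-1} = 0 for all m ≠ n, with λ_n pairwise distinct. If μ_j = μ_k for some j > k ≥ 0, then c_n = 0 for all n ≥ j + k. -/
theorem stmt_8 (lam mu c : ℕ → ℝ) (hlam : Function.Injective lam)
    (hlam0 : lam 0 = 0) (hmu0 : mu 0 = 0) (hc0 : c 0 = 1)
    (hrel : ∀ m n : ℕ, m ≠ n →
      (lam n - lam m) * c (n + m) + (mu n - mu m) * c (n + m - 1) = 0)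
    (j k : ℕ) (hjk : k < j) (hmu : mu j = mu k) :
    ∀ n : ℕ, j + k ≤ n → c n = 0 := by
  intro n hn
  induction n, hn using Nat.le_induction with
  | base =>
    have h := hrel k j hjk.ne
    rw [hmu, sub_self, zero_mul, add_zero] at h
    have hne : lam j - lam k ≠ 0 := sub_ne_zero.mpr (fun h' => hjk.ne' (hlam h'))
    exact (mul_eq_zero.mp h).resolve_left hne
  | succ n hn ih =>
    have h := hrel 0 (n + 1) (Nat.succ_ne_zero n).symm
    simp only [Nat.add_zero, Nat.add_sub_cancel, ih, mul_zero, add_zero] at h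
    have hne : lam (n + 1) - lam 0 ≠ 0 :=
      sub_ne_zero.mpr (fun h' => Nat.succ_ne_zero n (hlam h'))
    exact (mul_eq_zero.mp h).resolve_left hne
end

section
/- Suppose (λ_n − λ_m) c_{n+m} + (μ_n − μ_m) c_{n+m-1} = 0 for all m ≠ n, with λ_n pairwise distinct and μ_n pairwise distinct. If c_j = 0 for some j > 0, then c_n = 0 for all n ≥ j. -/
theorem stmt_9 (lam mu c : ℕ → ℝ) (hlam : Function.Injective lam)
    (hmu : Function.Injective mu) (hlam0 : lam 0 = 0) (hmu0 : mu 0 = 0)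
    (hc0 : c 0 = 1)
    (hrel : ∀ m n : ℕ, m ≠ n →
      (lam n - lam m) * c (n + m) + (mu n - mu m) * c (n + m - 1) = 0)
    (j : ℕ) (hj : 0 < j) (hcj : c j = 0) :
    ∀ n : ℕ, j ≤ n → c n = 0 := by
  intro n hn
  induction n, hn using Nat.le_induction with
  | base => exact hcj
  | succ n hn ih =>
    have h := hrel 0 (n + 1) (by omega)
    simp only [Nat.add_zero, Nat.add_sub_cancel, hlam0, hmu0, sub_zero] at h
    rw [ih] at h
    have hl : lam (n + 1) ≠ 0 := by
      intro h0
      have := hlam (h0.trans hlam0.symm)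
      omega
    have : lam (n + 1) * c (n + 1) = 0 := by linarith
    exact (mul_eq_zero.mp this).resolve_left hl
end

section
/- Let L x^n = λ_n x^n + μ_n x^{n-1} with λ_n satisfying λ_{n+2} + λ_n − Ω λ_{n+1} + B₂ = 0 and μ_n satisfying μ_{n+2} + μ_n − Ω μ_{n+1} + C₂ = 0 for all n ≥ 0. Then the operator identity X² L + L X² − Ω X L X + B₂ X² + C₂ X = 0 holds on all polynomials, where X is multiplication by x. Conversely, the operator identity implies both recurrences. -/
open Polynomial

set_option maxHeartbeats 1000000 in

theorem stmt_15 (L Xop : Polynomial ℝ →ₗ[ℝ] Polynomial ℝ)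
    (lam mu : ℕ → ℝ) (hmu0 : mu 0 = 0)
    (hL : ∀ n : ℕ, L (X ^ n) = lam n • X ^ n + mu n • X ^ (n - 1))
    (hX : ∀ p : Polynomial ℝ, Xop p = X * p) (Ω B₂ C₂ : ℝ) :
    (∀ p : Polynomial ℝ,
        Xop (Xop (L p)) + L (Xop (Xop p)) - Ω • Xop (L (Xop p)) +
          B₂ • Xop (Xop p) + C₂ • Xop p = 0) ↔
    ((∀ n : ℕ, lam (n + 2) + lam n - Ω * lam (n + 1) + B₂ = 0) ∧
     (∀ n : ℕ, mu (n + 2) + mu n - Ω * mu (n + 1) + C₂ = 0)) := by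
  have key : ∀ n : ℕ,
      Xop (Xop (L (X ^ n))) + L (Xop (Xop (X ^ n))) - Ω • Xop (L (Xop (X ^ n))) +
        B₂ • Xop (Xop (X ^ n)) + C₂ • Xop (X ^ n)
      = (lam (n + 2) + lam n - Ω * lam (n + 1) + B₂) • X ^ (n + 2) +
        (mu (n + 2) + mu n - Ω * mu (n + 1) + C₂) • X ^ (n + 1) := by
    intro n
    have hx1 : Xop (X ^ n) = X ^ (n + 1) := by rw [hX, pow_succ, mul_comm]
    have hx2 : Xop (X ^ (n + 1)) = X ^ (n + 2) := by rw [hX]; ring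
    have hLn : Xop (Xop (L (X ^ n))) = lam n • X ^ (n + 2) + mu n • X ^ (n + 1) := by
      rw [hL n]
      simp only [map_add, map_smul, hX]
      cases n with
      | zero =>
        rw [hmu0]
        simp only [zero_smul, add_zero]
        rw [smul_eq_C_mul, smul_eq_C_mul]; ring
      | succ k =>
        simp only [Nat.add_sub_cancel, smul_eq_C_mul]
        ring
    rw [hLn, hx1, hx2, hL (n + 2), hL (n + 1)]
    simp only [show n + 2 - 1 = n + 1 from rfl, Nat.add_sub_cancel, map_add, map_smul, hX]
    simp only [smul_eq_C_mul, map_add, map_sub, map_mul]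
    ring
  constructor
  · intro h
    have h2 : ∀ n : ℕ, (lam (n + 2) + lam n - Ω * lam (n + 1) + B₂) • (X : Polynomial ℝ) ^ (n + 2) +
        (mu (n + 2) + mu n - Ω * mu (n + 1) + C₂) • X ^ (n + 1) = 0 := fun n => by
      rw [← key n]; exact h (X ^ n)
    constructor
    · intro n
      have := congrArg (fun p => Polynomial.coeff p (n + 2)) (h2 n)
      simpa [coeff_smul, coeff_X_pow] using this
    · intro n
      have := congrArg (fun p => Polynomial.coeff p (n + 1)) (h2 n)
      simpa [coeff_smul, coeff_X_pow] using this
  · rintro ⟨h1, h2⟩ p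
    induction p using Polynomial.induction_on' with
    | add p q hp hq =>
      simp only [map_add, smul_add] at hp hq ⊢
      simp only [smul_eq_C_mul] at hp hq ⊢
      linear_combination hp + hq
    | monomial n a =>
      rw [← smul_X_eq_monomial]
      simp only [map_smul, smul_comm Ω a, smul_comm B₂ a, smul_comm C₂ a]
      rw [← smul_add, ← smul_sub, ← smul_add, ← smul_add, key n, h1 n, h2 n]
      simp
end

section
/- If monic orthogonal polynomials P_n satisfy P_{n+1}(x) + b_n P_n(x) + u_n P_{n-1}(x) = x P_n(x) and also L P_n = λ_n P_n where L x^n = λ_n x^n + μ_n x^{n-1} with λ_n pairwise distinct, then b_n = μ_n/(λ_n − λ_{n-1}) − μ_{n+1}/(λ_{n+1} − λ_n) for all n ≥ 1. -/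
open Polynomial

theorem stmt_16 (L : Polynomial ℝ →ₗ[ℝ] Polynomial ℝ) (lam mu : ℕ → ℝ)
    (hmu0 : mu 0 = 0) (hlam : Function.Injective lam)
    (hL : ∀ n : ℕ, L (X ^ n) = lam n • X ^ n + mu n • X ^ (n - 1))
    (P : ℕ → Polynomial ℝ) (hmonic : ∀ n, (P n).Monic)
    (hdeg : ∀ n, (P n).natDegree = n) (heig : ∀ n, L (P n) = lam n • P n)
    (b u : ℕ → ℝ)
    (hrec : ∀ n : ℕ, 1 ≤ n →
      X * P n = P (n + 1) + C (b n) * P n + C (u n) * P (n - 1)) :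
    ∀ n : ℕ, 1 ≤ n →
      b n = mu n / (lam n - lam (n - 1)) - mu (n + 1) / (lam (n + 1) - lam n) := by
  have key : ∀ p : ℝ[X], ∀ m : ℕ, (L p).coeff m
      = lam m * p.coeff m + mu (m+1) * p.coeff (m+1) := by
    intro p
    induction p using Polynomial.induction_on' with
    | add p q hp hq =>
      intro m
      simp only [map_add, coeff_add, hp, hq]; ring
    | monomial k a =>
      intro m
      have hm : (monomial k a : ℝ[X]) = a • X ^ k := by
        rw [smul_eq_C_mul, C_mul_X_pow_eq_monomial]
      rw [hm, map_smul, hL]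
      simp only [coeff_smul, coeff_add, coeff_X_pow, smul_eq_mul, coeff_monomial]
      by_cases h1 : m = k
      · subst h1
        by_cases h0 : m = 0
        · subst h0; simp [hmu0, mul_comm]
        · have e1 : ¬ m = m - 1 := by omega
          have e2 : ¬ m + 1 = m := by omega
          have e3 : ¬ m = m + 1 := by omega
          simp [e1, e2, e3]; ring
      · by_cases h2 : m + 1 = k
        · subst h2
          have e1 : ¬ m = m + 1 := by omega
          have e2 : (m + 1) - 1 = m := by omega
          simp [e1, e2]; ring
        · have e1 : ¬ m = k - 1 := by omega
          have e2 : ¬ k = m := by omega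
          have e3 : ¬ k = m + 1 := by omega
          simp [h1, h2, e1, e2, e3]
  have hcoeff : ∀ n : ℕ, 1 ≤ n → (P n).coeff (n-1) = mu n / (lam n - lam (n-1)) := by
    intro n hn
    have h1 := congrArg (fun p => p.coeff (n-1)) (heig n)
    simp only [key, coeff_smul, smul_eq_mul] at h1
    have hsub : n - 1 + 1 = n := by omega
    rw [hsub] at h1
    have hcn : (P n).coeff n = 1 := by
      have := (hmonic n).coeff_natDegree
      rwa [hdeg n] at this
    rw [hcn, mul_one] at h1
    have hne : lam n - lam (n-1) ≠ 0 := sub_ne_zero.mpr (fun h => by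
      have := hlam h; omega)
    field_simp
    linear_combination -h1
  intro n hn
  have h2 := congrArg (fun p => p.coeff n) (hrec n hn)
  simp only [coeff_add, coeff_C_mul] at h2
  have hx : (X * P n).coeff n = (P n).coeff (n-1) := by
    have h : n = (n-1) + 1 := by omega
    rw [h, coeff_X_mul]
    simp
  have h0 : (P (n-1)).coeff n = 0 :=
    coeff_eq_zero_of_natDegree_lt (by rw [hdeg]; omega)
  have hcn : (P n).coeff n = 1 := by
    have := (hmonic n).coeff_natDegree
    rwa [hdeg n] at this
  have hA := hcoeff n hn
  have hB := hcoeff (n+1) (by omega)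
  simp only [Nat.add_sub_cancel] at hB
  rw [hx, h0, hcn, hA, hB] at h2
  linarith
end
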